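/- Let Y be a Young diagram with n rows and n columns (drawn in English notation, with row lengths weakly decreasing). If Y does not contain the staircase shape (n, n-1, ..., 1), then Y has no transversal. If Y contains the staircase shape, then Y has exactly one transversal avoiding the matrix M(12) (namely the anti-diagonal transversal {(i, n+1-i)}), and exactly one transversal avoiding the matrix M(21). -/

import Mathlib

/-- A transversal of the Young diagram with row lengths `μ` inside an `n × n` square:
`t i` is the column of the unique element in row `i`. -/
def IsTransv {n : ℕ} (μ : Fin n → ℕ) (t : Fin n → Fin n) : Prop :=
  Function.Bijective t ∧ ∀ i, (t i).val < μ i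

/-- The transversal `t` contains the matrix M(12). -/
def ContainsM12 {n : ℕ} (t : Fin n → Fin n) : Prop :=
  ∃ i j : Fin n, i < j ∧ t i < t j

/-- The transversal `t` contains the matrix M(21) (the corner square must lie in the diagram). -/
def ContainsM21 {n : ℕ} (μ : Fin n → ℕ) (t : Fin n → Fin n) : Prop :=
  ∃ i j : Fin n, i < j ∧ t j < t i ∧ (t i).val < μ j

/-- A sum comparison lemma: if `f` and `g` agree off `{i, j}` and `g i + g j < f i + f j`,
then the total sum of `g` is less than that of `f`. -/
lemma sum_lt_of_pair {n : ℕ} (f g : Fin n → ℕ) (i j : Fin n) (hij : i ≠ j)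
    (hsame : ∀ k, k ≠ i → k ≠ j → g k = f k) (hlt : g i + g j < f i + f j) :
    ∑ k, g k < ∑ k, f k := by
  classical
  have key : ∀ h : Fin n → ℕ,
      ∑ k, h k = (∑ k ∈ (Finset.univ.erase j).erase i, h k) + h i + h j := by
    intro h
    rw [Finset.sum_erase_add _ _ (Finset.mem_erase.mpr ⟨hij, Finset.mem_univ i⟩),
      Finset.sum_erase_add _ _ (Finset.mem_univ j)]
  rw [key f, key g]
  have hrest : (∑ k ∈ (Finset.univ.erase j).erase i, g k)
      = ∑ k ∈ (Finset.univ.erase j).erase i, f k := by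
    refine Finset.sum_congr rfl fun k hk => ?_
    simp only [Finset.mem_erase] at hk
    exact hsame k hk.1 hk.2.1
  omega

/-- A strictly monotone bijection of `Fin n` is the identity. -/
lemma strictMono_bij_eq_id {n : ℕ} (f : Fin n → Fin n) (hmono : StrictMono f)
    (hsurj : Function.Surjective f) : f = id := by
  have hf : ((StrictMono.orderIsoOfSurjective f hmono hsurj : Fin n ≃o Fin n) : Fin n → Fin n) = f :=
    StrictMono.coe_orderIsoOfSurjective f hmono hsurj
  rw [Subsingleton.elim (StrictMono.orderIsoOfSurjective f hmono hsurj)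
    (OrderIso.refl (Fin n))] at hf
  funext i
  exact (congrFun hf i).symm

/-- Key step for uniqueness of the M21-avoiding transversal. -/
lemma not_lt_aux {n : ℕ} (μ : Fin n → ℕ) (t s : Fin n → Fin n)
    (ht : IsTransv μ t) (htav : ¬ ContainsM21 μ t) (hs : IsTransv μ s)
    (j : Fin n) (IH : ∀ k, j < k → t k = s k) : ¬ t j < s j := by
  intro hlt
  obtain ⟨i, hi⟩ := ht.1.2 (s j)
  rcases lt_trichotomy i j with h | h | h
  · exact htav ⟨i, j, h, by rw [hi]; exact hlt, by rw [hi]; exact hs.2 j⟩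
  · subst h; exact absurd hi (ne_of_lt hlt)
  · have := IH i h
    rw [hi] at this
    exact absurd (hs.1.1 this.symm) (ne_of_gt h)

theorem stmt8 (n : ℕ) (μ : Fin n → ℕ)
    (hanti : ∀ i j : Fin n, i ≤ j → μ j ≤ μ i) (hcol : ∀ i, μ i ≤ n) :
    ((¬ ∀ i : Fin n, n - i.val ≤ μ i) → ¬ ∃ t : Fin n → Fin n, IsTransv μ t) ∧
    ((∀ i : Fin n, n - i.val ≤ μ i) →
      (IsTransv μ (Fin.rev : Fin n → Fin n) ∧ ¬ ContainsM12 (Fin.rev : Fin n → Fin n)) ∧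
      (∃! t : Fin n → Fin n, IsTransv μ t ∧ ¬ ContainsM12 t) ∧
      (∃! t : Fin n → Fin n, IsTransv μ t ∧ ¬ ContainsM21 μ t)) := by
  classical
  constructor
  · -- no transversal if staircase not contained
    rintro h ⟨t, htb, htlt⟩
    push_neg at h
    obtain ⟨i0, hi0⟩ := h
    have hμn : μ i0 < n := lt_of_lt_of_le hi0 (Nat.sub_le n i0.val)
    have hcard := Finset.card_le_card_of_injOn t
      (s := Finset.Ici i0) (t := Finset.Iio (⟨μ i0, hμn⟩ : Fin n))
      (fun j hj => by
        rw [Finset.mem_coe, Finset.mem_Iio]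
        have h1 : (t j).val < μ j := htlt j
        have h2 : μ j ≤ μ i0 := hanti i0 j (Finset.mem_Ici.mp hj)
        exact Fin.lt_def.mpr (lt_of_lt_of_le h1 h2))
      (fun a _ b _ hab => htb.1 hab)
    rw [Fin.card_Ici, Fin.card_Iio] at hcard
    have hval : ((⟨μ i0, hμn⟩ : Fin n) : ℕ) = μ i0 := rfl
    omega
  · intro hst
    -- rev is a transversal avoiding M12
    have hrevT : IsTransv μ (Fin.rev : Fin n → Fin n) := by
      refine ⟨Fin.rev_involutive.bijective, fun i => ?_⟩
      have := hst i
      have hi := i.isLt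
      rw [Fin.val_rev]
      omega
    have hrevA : ¬ ContainsM12 (Fin.rev : Fin n → Fin n) := by
      rintro ⟨i, j, hij, hlt⟩
      rw [Fin.rev_lt_rev] at hlt
      exact absurd hij (not_lt.mpr hlt.le)
    refine ⟨⟨hrevT, hrevA⟩, ⟨Fin.rev, ⟨hrevT, hrevA⟩, ?_⟩, ?_⟩
    · -- uniqueness of M12-avoiding transversal
      rintro t ⟨ht, htav⟩
      have hanti' : StrictAnti t := by
        intro i j hij
        rcases lt_trichotomy (t i) (t j) with h | h | h
        · exact absurd ⟨i, j, hij, h⟩ htav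
        · exact absurd (ht.1.1 h) (ne_of_lt hij)
        · exact h
      have hmono : StrictMono (t ∘ (Fin.rev : Fin n → Fin n)) := by
        intro a b hab
        exact hanti' (Fin.rev_lt_rev.mpr hab)
      have hsurj : Function.Surjective (t ∘ (Fin.rev : Fin n → Fin n)) :=
        ht.1.2.comp Fin.rev_involutive.surjective
      have hid := strictMono_bij_eq_id _ hmono hsurj
      funext i
      have := congrFun hid (Fin.rev i)
      simpa [Fin.rev_rev] using this
    · -- existence and uniqueness of M21-avoiding transversal
      -- existence: minimize F over all transversals
      set F : (Fin n → Fin n) → ℕ := fun t => ∑ k, (n - k.val) * (t k).val with hF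
      set S : Finset (Fin n → Fin n) := Finset.univ.filter (fun t => IsTransv μ t) with hS
      have hne : (Fin.rev : Fin n → Fin n) ∈ S := by
        rw [hS, Finset.mem_filter]; exact ⟨Finset.mem_univ _, hrevT⟩
      obtain ⟨t, htS, htmin⟩ := S.exists_min_image F ⟨_, hne⟩
      have ht : IsTransv μ t := (Finset.mem_filter.mp htS).2
      have htav : ¬ ContainsM21 μ t := by
        rintro ⟨i, j, hij, hji, hμ⟩
        set t' : Fin n → Fin n := t ∘ (Equiv.swap i j) with ht'
        have hne' : i ≠ j := ne_of_lt hij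
        have ht'i : t' i = t j := by rw [ht']; simp [Equiv.swap_apply_left]
        have ht'j : t' j = t i := by rw [ht']; simp [Equiv.swap_apply_right]
        have ht'k : ∀ k, k ≠ i → k ≠ j → t' k = t k := by
          intro k h1 h2
          rw [ht']; simp [Equiv.swap_apply_of_ne_of_ne h1 h2]
        have ht'T : IsTransv μ t' := by
          refine ⟨ht.1.comp (Equiv.swap i j).bijective, fun k => ?_⟩
          by_cases h1 : k = i
          · rw [h1, ht'i]
            exact lt_of_lt_of_le (ht.2 j) (hanti i j hij.le)
          · by_cases h2 : k = j
            · rw [h2, ht'j]; exact hμ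
            · rw [ht'k k h1 h2]; exact ht.2 k
        have ht'S : t' ∈ S := by
          rw [hS, Finset.mem_filter]; exact ⟨Finset.mem_univ _, ht'T⟩
        have hFlt : F t' < F t := by
          rw [hF]
          refine sum_lt_of_pair _ _ i j hne' (fun k h1 h2 => by rw [ht'k k h1 h2]) ?_
          rw [ht'i, ht'j]
          have ha : (t j).val < (t i).val := hji
          have hw : n - j.val < n - i.val := by
            have := j.isLt
            have := Fin.lt_def.mp hij
            omega
          nlinarith [Nat.sub_le n i.val]
        exact absurd (htmin t' ht'S) (not_le.mpr hFlt)
      refine ⟨t, ⟨ht, htav⟩, ?_⟩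
      -- uniqueness
      rintro s ⟨hs, hsav⟩
      have key : ∀ m : ℕ, ∀ j : Fin n, n - j.val ≤ m → s j = t j := by
        intro m
        induction m with
        | zero => intro j hj; have := j.isLt; omega
        | succ m IHm =>
          intro j hj
          have IH : ∀ k, j < k → t k = s k := by
            intro k hk
            have : n - k.val ≤ m := by
              have := Fin.lt_def.mp hk
              have := k.isLt
              omega
            exact (IHm k this).symm
          have h1 := not_lt_aux μ t s ht htav hs j IH
          have h2 := not_lt_aux μ s t hs hsav ht j (fun k hk => (IH k hk).symm)
          rcases lt_trichotomy (s j) (t j) with h | h | h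
          · exact absurd h h2
          · exact h
          · exact absurd h h1
      funext j
      exact key n j (Nat.sub_le n j.val)
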